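/- Every J²C-module (C,V,J) with V ≠ 0 and (C, ·) associative (i.e., ·_v independent of v) is isomorphic to (F, Fⁿ) where F is the normed division algebra (C, ·_v), V ≅ Fⁿ via an orthonormal C-basis, and J is left multiplication by elements of F. -/

import Mathlib

open scoped RealInnerProductSpace

theorem stmt10 {C V : Type*} [NormedAddCommGroup C] [InnerProductSpace ℝ C]
    [FiniteDimensional ℝ C] [NormedAddCommGroup V] [InnerProductSpace ℝ V]
    [FiniteDimensional ℝ V]
    (e : C) (he : ‖e‖ = 1) (J : C →ₗ[ℝ] V →ₗ[ℝ] V)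
    (hJ1 : ∀ v : V, J e v = v)
    (hJnorm : ∀ (ζ : C) (v : V), ‖J ζ v‖ = ‖ζ‖ * ‖v‖)
    (hJ2 : ∀ (v : V) (ζ η : C), ∃ ξ : C, J ζ (J η v) = J ξ v)
    (hVnt : ∃ v : V, v ≠ 0)
    (mul : C → C → C)
    (hmul : ∀ v : V, v ≠ 0 → ∀ ζ η : C, J (mul ζ η) v = J ζ (J η v)) :
    ∃ (n : ℕ) (g : PiLp 2 (fun _ : Fin n => C) ≃ₗᵢ[ℝ] V),
      ∀ (q : C) (x : PiLp 2 (fun _ : Fin n => C)),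
        g (WithLp.toLp 2 (fun i => mul q (x i))) = J q (g x) := by
  classical
  -- polarization identities
  have polV : ∀ (ζ : C) (w u : V), ⟪J ζ w, J ζ u⟫ = ‖ζ‖ ^ 2 * ⟪w, u⟫ := by
    intro ζ w u
    rw [real_inner_eq_norm_add_mul_self_sub_norm_mul_self_sub_norm_mul_self_div_two,
      real_inner_eq_norm_add_mul_self_sub_norm_mul_self_sub_norm_mul_self_div_two,
      ← map_add, hJnorm, hJnorm, hJnorm]
    ring
  have polC : ∀ (ζ η : C) (v : V), ⟪J ζ v, J η v⟫ = ⟪ζ, η⟫ * ‖v‖ ^ 2 := by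
    intro ζ η v
    have h : J ζ v + J η v = J (ζ + η) v := by rw [map_add]; rfl
    rw [real_inner_eq_norm_add_mul_self_sub_norm_mul_self_sub_norm_mul_self_div_two,
      real_inner_eq_norm_add_mul_self_sub_norm_mul_self_sub_norm_mul_self_div_two,
      h, hJnorm, hJnorm, hJnorm]
    ring
  have Jinj : ∀ ζ : C, ζ ≠ 0 → Function.Injective (J ζ) := by
    intro ζ hζ
    rw [← LinearMap.ker_eq_bot, LinearMap.ker_eq_bot']
    intro u hu
    have h := hJnorm ζ u
    rw [hu, norm_zero] at h
    rcases mul_eq_zero.mp h.symm with h' | h'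
    · exact absurd (norm_eq_zero.mp h') hζ
    · exact norm_eq_zero.mp h'
  set M : V → Submodule ℝ V := fun v => LinearMap.range (J.flip v) with hMdef
  have memM : ∀ (v : V) (ζ : C), J ζ v ∈ M v := fun v ζ => ⟨ζ, rfl⟩
  have Mle : ∀ (ζ : C) (v : V), Submodule.map (J ζ) (M v) ≤ M v := by
    rintro ζ v _ ⟨_, ⟨η, rfl⟩, rfl⟩
    obtain ⟨ξ, hξ⟩ := hJ2 v ζ η
    exact ⟨ξ, hξ.symm⟩
  have Mmap : ∀ (ζ : C), ζ ≠ 0 → ∀ v : V, Submodule.map (J ζ) (M v) = M v := by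
    intro ζ hζ v
    refine Submodule.eq_of_le_of_finrank_le (Mle ζ v) ?_
    exact le_of_eq (Submodule.equivMapOfInjective (J ζ) (Jinj ζ hζ) (M v)).finrank_eq
  have orth : ∀ (v w : V), (∀ η : C, ⟪J η v, w⟫ = 0) → ∀ ζ η : C, ⟪J ζ w, J η v⟫ = 0 := by
    intro v w hw ζ η
    by_cases hζ : ζ = 0
    · subst hζ
      rw [map_zero]
      simp
    · have hmem : J η v ∈ Submodule.map (J ζ) (M v) := by
        rw [Mmap ζ hζ v]; exact memM v η
      obtain ⟨u, hu, huu⟩ := hmem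
      obtain ⟨ξ, rfl⟩ := hu
      rw [← huu, polV]
      have h0 : ⟪(J.flip v) ξ, w⟫ = 0 := hw ξ
      rw [real_inner_comm] at h0
      rw [h0, mul_zero]
  -- main induction
  have key : ∀ (k : ℕ) (W : Submodule ℝ V), Module.finrank ℝ W = k →
      (∀ v ∈ W, ∀ ζ : C, J ζ v ∈ W) →
      ∃ (n : ℕ) (v : Fin n → V), (∀ i, ‖v i‖ = 1) ∧ (∀ i, v i ∈ W) ∧
        (∀ i j, i ≠ j → ∀ ζ η : C, ⟪J ζ (v i), J η (v j)⟫ = 0) ∧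
        W ≤ ⨆ i, M (v i) := by
    intro k
    induction k using Nat.strong_induction_on with
    | _ k ih =>
      intro W hrank hinv
      by_cases hW : W = ⊥
      · refine ⟨0, Fin.elim0, fun i => i.elim0, fun i => i.elim0, fun i => i.elim0, ?_⟩
        rw [hW]; exact bot_le
      · obtain ⟨v0, hv0W, hv0⟩ := Submodule.exists_mem_ne_zero_of_ne_bot hW
        set v : V := ‖v0‖⁻¹ • v0 with hvdef
        have hv1 : ‖v‖ = 1 := by
          rw [hvdef, norm_smul, norm_inv, norm_norm, inv_mul_cancel₀ (norm_ne_zero_iff.mpr hv0)]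
        have hvW : v ∈ W := W.smul_mem _ hv0W
        have hMW : M v ≤ W := by
          rintro _ ⟨ζ, rfl⟩
          exact hinv v hvW ζ
        set W' : Submodule ℝ V := (M v)ᗮ ⊓ W with hW'def
        have hW'le : W' ≤ W := inf_le_right
        have horthmem : ∀ w ∈ W', ∀ η : C, ⟪J η v, w⟫ = 0 := by
          intro w hw η
          exact (Submodule.mem_orthogonal _ _).mp hw.1 _ (memM v η)
        have hW'inv : ∀ w ∈ W', ∀ ζ : C, J ζ w ∈ W' := by
          intro w hw ζ
          refine ⟨(Submodule.mem_orthogonal _ _).mpr ?_, hinv w (hW'le hw) ζ⟩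
          rintro _ ⟨η, rfl⟩
          rw [real_inner_comm]
          exact orth v w (horthmem w hw) ζ η
        have hvnot : v ∉ W' := by
          intro h
          have h0 : ⟪J e v, v⟫ = 0 := horthmem v h e
          rw [hJ1, real_inner_self_eq_norm_sq, hv1] at h0
          norm_num at h0
        have hlt : W' < W := lt_of_le_of_ne hW'le (fun h => hvnot (h.symm ▸ hvW))
        have hk : Module.finrank ℝ W' < k := hrank ▸ Submodule.finrank_lt_finrank_of_lt hlt
        obtain ⟨n, vs, h1, h2, h3, h4⟩ := ih _ hk W' rfl hW'inv
        have hov : ∀ (j' : Fin n) (ζ' η' : C), ⟪J ζ' (vs j'), J η' v⟫ = 0 := by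
          intro j' ζ' η'
          exact orth v (vs j') (horthmem _ (h2 j')) ζ' η'
        refine ⟨n + 1, Fin.cons v vs, ?_, ?_, ?_, ?_⟩
        · intro i
          rcases Fin.eq_zero_or_eq_succ i with hi | ⟨i', rfl⟩
          · rw [hi, Fin.cons_zero]; exact hv1
          · rw [Fin.cons_succ]; exact h1 i'
        · intro i
          rcases Fin.eq_zero_or_eq_succ i with hi | ⟨i', rfl⟩
          · rw [hi, Fin.cons_zero]; exact hvW
          · rw [Fin.cons_succ]; exact hW'le (h2 i')
        · intro i j hij ζ η
          rcases Fin.eq_zero_or_eq_succ i with hi | ⟨i', rfl⟩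
          · rcases Fin.eq_zero_or_eq_succ j with hj | ⟨j', rfl⟩
            · exact absurd (hi.trans hj.symm) hij
            · subst hi
              rw [Fin.cons_zero, Fin.cons_succ, real_inner_comm]
              exact hov j' η ζ
          · rcases Fin.eq_zero_or_eq_succ j with hj | ⟨j', rfl⟩
            · subst hj
              rw [Fin.cons_zero, Fin.cons_succ]
              exact hov i' ζ η
            · rw [Fin.cons_succ, Fin.cons_succ]
              exact h3 i' j' (fun h => hij (congrArg Fin.succ h)) ζ η
        · intro w hw
          obtain ⟨y, hy, z, hz, hwyz⟩ := Submodule.exists_add_mem_mem_orthogonal (K := M v) w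
          have hzW : z ∈ W := by
            have hzeq : z = w - y := by rw [hwyz]; abel
            rw [hzeq]
            exact W.sub_mem hw (hMW hy)
          have hzW' : z ∈ W' := ⟨hz, hzW⟩
          have h0 : y ∈ ⨆ i, M ((Fin.cons v vs : Fin (n+1) → V) i) := by
            refine le_iSup (fun i => M ((Fin.cons v vs : Fin (n+1) → V) i)) 0 ?_
            simpa using hy
          have h1' : z ∈ ⨆ i, M ((Fin.cons v vs : Fin (n+1) → V) i) := by
            have hle : (⨆ i, M (vs i)) ≤ ⨆ i, M ((Fin.cons v vs : Fin (n+1) → V) i) := by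
              refine iSup_le fun i => le_iSup_of_le i.succ ?_
              simp
            exact hle (h4 hzW')
          rw [hwyz]
          exact Submodule.add_mem _ h0 h1'
  obtain ⟨n, v, hnorm1, -, horth2, hspan⟩ :=
    key (Module.finrank ℝ (⊤ : Submodule ℝ V)) ⊤ rfl (fun _ _ _ => trivial)
  have hvne : ∀ i, v i ≠ 0 := by
    intro i h
    have := hnorm1 i
    rw [h, norm_zero] at this
    norm_num at this
  set g₀ : PiLp 2 (fun _ : Fin n => C) →ₗ[ℝ] V :=
    { toFun := fun x => ∑ i, J (x i) (v i)
      map_add' := by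
        intro x y
        simp only [PiLp.add_apply, map_add, LinearMap.add_apply, Finset.sum_add_distrib]
      map_smul' := by
        intro r x
        simp only [PiLp.smul_apply, map_smul, LinearMap.smul_apply, RingHom.id_apply,
          Finset.smul_sum] } with hg₀def
  have hg₀app : ∀ x : PiLp 2 (fun _ : Fin n => C), g₀ x = ∑ i, J (x i) (v i) := fun _ => rfl
  have hinner : ∀ x y : PiLp 2 (fun _ : Fin n => C), ⟪g₀ x, g₀ y⟫ = ⟪x, y⟫ := by
    intro x y
    rw [hg₀app, hg₀app, sum_inner, PiLp.inner_apply]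
    refine Finset.sum_congr rfl fun i _ => ?_
    rw [inner_sum]
    rw [Finset.sum_eq_single_of_mem i (Finset.mem_univ i)]
    · rw [polC, hnorm1, one_pow, mul_one]
    · intro j _ hji
      exact horth2 i j (fun h => hji (h.symm)) (x i) (y j)
  have hinj : Function.Injective g₀ := by
    rw [← LinearMap.ker_eq_bot, LinearMap.ker_eq_bot']
    intro x hx
    have h0 : ⟪x, x⟫ = (0 : ℝ) := by rw [← hinner, hx, inner_zero_right]
    exact inner_self_eq_zero.mp h0
  have hsurj : Function.Surjective g₀ := by
    rw [← LinearMap.range_eq_top, eq_top_iff]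
    refine le_trans hspan (iSup_le fun i => ?_)
    rintro _ ⟨ζ, rfl⟩
    refine ⟨WithLp.toLp 2 (Pi.single i ζ), ?_⟩
    rw [hg₀app, Finset.sum_eq_single_of_mem i (Finset.mem_univ i)]
    · rw [WithLp.ofLp_toLp, Pi.single_eq_same]; rfl
    · intro j _ hji
      rw [WithLp.ofLp_toLp, Pi.single_eq_of_ne hji, map_zero, LinearMap.zero_apply]
  let geq : PiLp 2 (fun _ : Fin n => C) ≃ₗ[ℝ] V := LinearEquiv.ofBijective g₀ ⟨hinj, hsurj⟩
  refine ⟨n, geq.isometryOfInner (fun x y => hinner x y), ?_⟩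
  intro q x
  have hco : ∀ y : PiLp 2 (fun _ : Fin n => C),
      (geq.isometryOfInner (fun a b => hinner a b)) y = g₀ y := fun y => rfl
  rw [hco, hco, hg₀app, hg₀app, map_sum]
  refine Finset.sum_congr rfl fun i _ => ?_
  exact hmul (v i) (hvne i) q (x i)
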